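/- Let σ > 0, d ≥ 1, and let A_{r/σ} ⊂ ℝ^d be the Euclidean ball of radius r/σ centered at the origin. Then the ratio ( ∫_{A_{r/σ}} ‖u‖² e^{−‖u‖} du ) / ( ∫_{A_{r/σ}} e^{−‖u‖} du ) is at most ( ∫_{ℝ^d} ‖u‖² e^{−‖u‖} du ) / ( ∫_{ℝ^d} e^{−‖u‖} du ) = d(d+1). In particular the conditional second moment of the Euclidean Laplace restricted to any centered ball is bounded by d(d+1). -/

import Mathlib

open MeasureTheory

open Set Metric

-- 1d: exp(-(a|x|)) is integrable
lemma integrable_exp_neg_mul_abs {a : ℝ} (ha : 0 < a) :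
    Integrable (fun x : ℝ => Real.exp (-(a * |x|))) := by
  have hIoi : IntegrableOn (fun x : ℝ => Real.exp (-(a * |x|))) (Ioi 0) := by
    refine (exp_neg_integrableOn_Ioi 0 ha).congr_fun (fun x hx => ?_) measurableSet_Ioi
    rw [abs_of_pos hx]; simp only [neg_mul]
  have hIic : IntegrableOn (fun x : ℝ => Real.exp (-(a * |x|))) (Iic 0) := by
    rw [← Measure.map_neg_eq_self (volume : Measure ℝ)]
    have m : MeasurableEmbedding fun x : ℝ => -x :=
      (Homeomorph.neg ℝ).measurableEmbedding
    rw [m.integrableOn_map_iff]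
    simp_rw [Function.comp_def, abs_neg, neg_preimage, neg_Iic, neg_zero]
    exact (integrableOn_Ici_iff_integrableOn_Ioi).mpr hIoi
  have := hIic.union hIoi
  rwa [Iic_union_Ioi, integrableOn_univ] at this

lemma coord_abs_le_norm {d : ℕ} (x : EuclideanSpace ℝ (Fin d)) (i : Fin d) :
    |x i| ≤ ‖x‖ := by
  rw [EuclideanSpace.norm_eq]
  refine Real.le_sqrt_of_sq_le ?_
  rw [sq_abs]
  calc x i ^ 2 = ‖x i‖ ^ 2 := by rw [Real.norm_eq_abs, sq_abs]
    _ ≤ ∑ j, ‖x j‖ ^ 2 :=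
      Finset.single_le_sum (f := fun j => ‖x j‖ ^ 2) (fun j _ => by positivity)
        (Finset.mem_univ i)

lemma integrable_exp_neg_mul_norm {d : ℕ} (hd : 1 ≤ d) {c : ℝ} (hc : 0 < c) :
    Integrable (fun x : EuclideanSpace ℝ (Fin d) => Real.exp (-(c * ‖x‖))) := by
  have hd0 : (0 : ℝ) < d := by exact_mod_cast hd
  have hcd : 0 < c / d := by positivity
  have hprod : Integrable (fun y : Fin d → ℝ => ∏ i, Real.exp (-(c / d * |y i|))) :=
    Integrable.fintype_prod (fun _ => integrable_exp_neg_mul_abs hcd)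
  have hpres := (EuclideanSpace.volume_preserving_symm_measurableEquiv_toLp (Fin d)).symm
  have hprodE : Integrable
      (fun x : EuclideanSpace ℝ (Fin d) => ∏ i, Real.exp (-(c / d * |x i|))) := by
    rw [← MeasurePreserving.integrable_comp_emb hpres (MeasurableEquiv.measurableEmbedding _)]
    exact hprod
  refine hprodE.mono' ?_ (Filter.Eventually.of_forall fun x => ?_)
  · exact (Real.continuous_exp.comp ((continuous_const.mul continuous_norm).neg)).aestronglyMeasurable
  · rw [Real.norm_eq_abs, abs_of_pos (Real.exp_pos _)]
    have hsum : ∑ i, |x i| ≤ d * ‖x‖ := by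
      calc ∑ i, |x i| ≤ ∑ _i : Fin d, ‖x‖ :=
            Finset.sum_le_sum (fun i _ => coord_abs_le_norm x i)
        _ = d * ‖x‖ := by simp [Finset.sum_const, nsmul_eq_mul]
    have : ∏ i, Real.exp (-(c / d * |x i|)) = Real.exp (-(c / d * ∑ i, |x i|)) := by
      rw [← Real.exp_sum]
      congr 1
      rw [Finset.sum_neg_distrib, ← Finset.mul_sum]
    rw [this]
    apply Real.exp_le_exp.mpr
    rw [neg_le_neg_iff]
    rw [div_mul_eq_mul_div, div_le_iff₀ hd0] at *
    nlinarith [hsum, hc.le]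

lemma euclidean_integral_norm_pow_mul_exp (d : ℕ) (hd : 1 ≤ d) (k : ℕ) :
    (∫ u : EuclideanSpace ℝ (Fin d), ‖u‖ ^ k * Real.exp (-‖u‖)) =
      d * (volume (Metric.ball (0 : EuclideanSpace ℝ (Fin d)) 1)).toReal *
        Real.Gamma ((d : ℝ) + k) := by
  haveI : Nonempty (Fin d) := Fin.pos_iff_nonempty.mp hd
  haveI : Nontrivial (EuclideanSpace ℝ (Fin d)) := inferInstance
  have hd0 : (0 : ℝ) < d := by exact_mod_cast hd
  have h := integral_fun_norm_addHaar (volume : Measure (EuclideanSpace ℝ (Fin d)))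
      (fun y => y ^ k * Real.exp (-y))
  rw [finrank_euclideanSpace_fin] at h
  have hI : (∫ y in Ioi (0:ℝ), y ^ (d - 1) • (y ^ k * Real.exp (-y)))
      = Real.Gamma ((d : ℝ) + k) := by
    rw [Real.Gamma_eq_integral (by positivity : (0:ℝ) < (d : ℝ) + k)]
    refine setIntegral_congr_fun measurableSet_Ioi (fun y hy => ?_)
    have hy0 : (0:ℝ) < y := hy
    have hcast : ((d - 1 + k : ℕ) : ℝ) = (d : ℝ) + k - 1 := by
      rw [Nat.cast_add, Nat.cast_sub hd]
      push_cast
      ring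
    rw [smul_eq_mul, ← mul_assoc, ← pow_add, mul_comm,
      ← Real.rpow_natCast y (d - 1 + k), hcast]
  refine h.trans ?_
  simp only [smul_eq_mul] at hI
  simp only [nsmul_eq_mul, smul_eq_mul]
  rw [hI, measureReal_def]
  ring

theorem laplace_conditional_second_moment_bound
    (σ r : ℝ) (hσ : 0 < σ) (hr : 0 < r) (d : ℕ) (hd : 1 ≤ d) :
    (∫ u in Metric.ball (0 : EuclideanSpace ℝ (Fin d)) (r / σ),
          ‖u‖ ^ 2 * Real.exp (-‖u‖)) /
        (∫ u in Metric.ball (0 : EuclideanSpace ℝ (Fin d)) (r / σ),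
          Real.exp (-‖u‖)) ≤
      (∫ u : EuclideanSpace ℝ (Fin d), ‖u‖ ^ 2 * Real.exp (-‖u‖)) /
        (∫ u : EuclideanSpace ℝ (Fin d), Real.exp (-‖u‖)) ∧
    (∫ u : EuclideanSpace ℝ (Fin d), ‖u‖ ^ 2 * Real.exp (-‖u‖)) /
        (∫ u : EuclideanSpace ℝ (Fin d), Real.exp (-‖u‖)) = d * (d + 1) := by
  set E := EuclideanSpace ℝ (Fin d)
  have hd0 : (0 : ℝ) < d := by exact_mod_cast hd
  set R : ℝ := r / σ with hRdef
  have hR : 0 < R := div_pos hr hσ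
  -- integrability
  have hg : Integrable (fun u : E => Real.exp (-‖u‖)) := by
    have := integrable_exp_neg_mul_norm hd (one_pos)
    simpa using this
  have hf : Integrable (fun u : E => ‖u‖ ^ 2 * Real.exp (-‖u‖)) := by
    have h16 := (integrable_exp_neg_mul_norm hd
      (by norm_num : (0:ℝ) < 1/2)).const_mul 16
    refine h16.mono' ?_ (Filter.Eventually.of_forall fun x => ?_)
    · exact ((continuous_norm.pow 2).mul
        (Real.continuous_exp.comp continuous_norm.neg)).aestronglyMeasurable
    · rw [Real.norm_eq_abs, abs_of_nonneg (by positivity)]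
      have hes : Real.exp (‖x‖/2) = Real.exp (‖x‖/4) * Real.exp (‖x‖/4) := by
        rw [← Real.exp_add]; ring_nf
      have h₁ : ‖x‖ ^ 2 ≤ 16 * Real.exp (‖x‖/2) := by
        nlinarith [Real.add_one_le_exp (‖x‖/4), Real.exp_pos (‖x‖/4), norm_nonneg x]
      have h₂ : Real.exp (-‖x‖) * Real.exp (‖x‖/2) = Real.exp (-(1/2 * ‖x‖)) := by
        rw [← Real.exp_add]; ring_nf
      calc ‖x‖ ^ 2 * Real.exp (-‖x‖)
          ≤ (16 * Real.exp (‖x‖/2)) * Real.exp (-‖x‖) :=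
            mul_le_mul_of_nonneg_right h₁ (Real.exp_pos _).le
        _ = 16 * (Real.exp (-‖x‖) * Real.exp (‖x‖/2)) := by ring
        _ = 16 * Real.exp (-(1/2 * ‖x‖)) := by rw [h₂]
  -- full-space integrals
  have e0 : (∫ u : E, Real.exp (-‖u‖)) =
      d * (volume (Metric.ball (0 : E) 1)).toReal * Real.Gamma (d : ℝ) := by
    have := euclidean_integral_norm_pow_mul_exp d hd 0
    simpa using this
  have e2 : (∫ u : E, ‖u‖ ^ 2 * Real.exp (-‖u‖)) =
      d * (volume (Metric.ball (0 : E) 1)).toReal * Real.Gamma ((d : ℝ) + 2) := by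
    have := euclidean_integral_norm_pow_mul_exp d hd 2
    simpa using this
  have hV : 0 < (volume (Metric.ball (0 : E) 1)).toReal :=
    ENNReal.toReal_pos (measure_ball_pos _ _ one_pos).ne' measure_ball_lt_top.ne
  have hΓpos : 0 < Real.Gamma (d : ℝ) := Real.Gamma_pos_of_pos hd0
  have hΓ : Real.Gamma ((d : ℝ) + 2) = ((d : ℝ) + 1) * (d : ℝ) * Real.Gamma (d : ℝ) := by
    have h1 : ((d : ℝ) + 2) = ((d : ℝ) + 1) + 1 := by ring
    rw [h1, Real.Gamma_add_one (by positivity), Real.Gamma_add_one hd0.ne']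
    ring
  have part2 : (∫ u : E, ‖u‖ ^ 2 * Real.exp (-‖u‖)) /
      (∫ u : E, Real.exp (-‖u‖)) = (d : ℝ) * ((d : ℝ) + 1) := by
    rw [e0, e2, hΓ]
    field_simp
  refine ⟨?_, part2⟩
  -- the inequality
  set A : Set E := Metric.ball (0 : E) R with hAdef
  have hA : MeasurableSet A := measurableSet_ball
  have hI0 : (∫ u : E, Real.exp (-‖u‖)) > 0 := by
    rw [e0]; positivity
  have hIA0 : 0 < ∫ u in A, Real.exp (-‖u‖) := by
    have hle : Real.exp (-R) * (volume A).toReal ≤ ∫ u in A, Real.exp (-‖u‖) := by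
      rw [mul_comm, ← smul_eq_mul, ← measureReal_def]
      refine setIntegral_ge_of_const_le hA measure_ball_lt_top.ne (fun x hx => ?_)
        hg.integrableOn
      have : ‖x‖ < R := by simpa [A, dist_zero_right] using hx
      exact Real.exp_le_exp.mpr (by linarith)
    have hVA : 0 < (volume A).toReal :=
      ENNReal.toReal_pos (measure_ball_pos _ _ hR).ne' measure_ball_lt_top.ne
    nlinarith [Real.exp_pos (-R)]
  have key1 : (∫ u in A, ‖u‖ ^ 2 * Real.exp (-‖u‖)) ≤
      R ^ 2 * ∫ u in A, Real.exp (-‖u‖) := by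
    rw [← integral_const_mul]
    refine setIntegral_mono_on hf.integrableOn (hg.integrableOn.const_mul _) hA
      (fun x hx => ?_)
    have hxR : ‖x‖ < R := by simpa [A, dist_zero_right] using hx
    exact mul_le_mul_of_nonneg_right
      (pow_le_pow_left₀ (norm_nonneg x) hxR.le 2) (Real.exp_pos _).le
  have key2 : R ^ 2 * (∫ u in Aᶜ, Real.exp (-‖u‖)) ≤
      ∫ u in Aᶜ, ‖u‖ ^ 2 * Real.exp (-‖u‖) := by
    rw [← integral_const_mul]
    refine setIntegral_mono_on (hg.integrableOn.const_mul _) hf.integrableOn hA.compl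
      (fun x hx => ?_)
    have hxR : R ≤ ‖x‖ := by
      have : ¬ ‖x‖ < R := by simpa [A, dist_zero_right] using hx
      linarith
    exact mul_le_mul_of_nonneg_right
      (pow_le_pow_left₀ hR.le hxR 2) (Real.exp_pos _).le
  have hsplitg : (∫ u in A, Real.exp (-‖u‖)) + (∫ u in Aᶜ, Real.exp (-‖u‖)) =
      ∫ u : E, Real.exp (-‖u‖) := integral_add_compl hA hg
  have hsplitf : (∫ u in A, ‖u‖ ^ 2 * Real.exp (-‖u‖)) +
      (∫ u in Aᶜ, ‖u‖ ^ 2 * Real.exp (-‖u‖)) =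
      ∫ u : E, ‖u‖ ^ 2 * Real.exp (-‖u‖) := integral_add_compl hA hf
  have hIC0 : 0 ≤ ∫ u in Aᶜ, Real.exp (-‖u‖) :=
    setIntegral_nonneg hA.compl (fun x _ => (Real.exp_pos _).le)
  have hIA2 : 0 ≤ ∫ u in A, ‖u‖ ^ 2 * Real.exp (-‖u‖) :=
    setIntegral_nonneg hA (fun x _ => by positivity)
  rw [div_le_div_iff₀ hIA0 hI0]
  nlinarith [key1, key2, hIA0, hIC0, hIA2, hsplitg, hsplitf, sq_nonneg R]
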